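/- Let F : R^n → R^m be differentiable at s with Jacobian J, and for ε ∼ N(0, σ²I_n) define the scaled quantity (1/σ²)·E[εᵀ·(first-order part of F(s+ε) − F(s) pulled back by a linear map ω)]. If the remainder satisfies F(s+ε) − F(s) = J·ε + R(ε) with ‖R(ε)‖ ≤ C‖ε‖² for ‖ε‖ ≤ 1, then |(1/σ²)·E[εᵀ·ω·R(ε)]| → 0 as σ → 0. -/

import Mathlib

open MeasureTheory ProbabilityTheory Matrix Filter
open scoped NNReal

open Real
open scoped ENNReal Topology


noncomputable def gaussMoment (k : ℕ) : ℝ := ∫ t : ℝ, t ^ k * gaussianPDFReal 0 1 t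

lemma gaussianPDFReal_zero_mean (v : ℝ≥0) (x : ℝ) :
    gaussianPDFReal 0 v x = (Real.sqrt (2 * π * v))⁻¹ * Real.exp (-(x ^ 2) / (2 * v)) := by
  simp [gaussianPDFReal]

lemma integrable_pow_mul_gaussianPDFReal (k : ℕ) {v : ℝ≥0} (hv : v ≠ 0) :
    Integrable (fun t : ℝ => t ^ k * gaussianPDFReal 0 v t) := by
  have hv' : (0:ℝ) < v := NNReal.coe_pos.2 (pos_iff_ne_zero.2 hv)
  have hb : (0:ℝ) < (2 * (v:ℝ))⁻¹ := by positivity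
  have h := integrable_rpow_mul_exp_neg_mul_sq hb (s := (k:ℝ)) (by exact lt_of_lt_of_le neg_one_lt_zero (Nat.cast_nonneg k))
  simp only [Real.rpow_natCast] at h
  have h2 := h.const_mul ((Real.sqrt (2 * π * v))⁻¹)
  refine h2.congr (Eventually.of_forall fun t => ?_)
  dsimp only
  rw [gaussianPDFReal_zero_mean]
  rw [show -(t ^ 2) / (2 * (v:ℝ)) = -((2 * (v:ℝ))⁻¹ * t ^ 2) by field_simp]
  ring

lemma gaussianPDFReal_scale {σ : ℝ≥0} (hσ : σ ≠ 0) (x : ℝ) :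
    gaussianPDFReal 0 (σ ^ 2) ((σ:ℝ) * x) = (σ:ℝ)⁻¹ * gaussianPDFReal 0 1 x := by
  have hσ' : (0:ℝ) < σ := NNReal.coe_pos.2 (pos_iff_ne_zero.2 hσ)
  rw [gaussianPDFReal_zero_mean, gaussianPDFReal_zero_mean]
  push_cast
  rw [show 2 * π * (σ:ℝ)^2 = (2 * π) * (σ:ℝ)^2 by ring,
    Real.sqrt_mul (by positivity) ((σ:ℝ)^2), Real.sqrt_sq hσ'.le]
  rw [mul_inv]
  rw [show -(((σ:ℝ) * x) ^ 2) / (2 * (σ:ℝ) ^ 2) = -(x^2) / (2 * 1) from by field_simp]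
  simp [mul_one]
  ring

lemma pow_mul_gaussianPDFReal_integral (k : ℕ) {σ : ℝ≥0} (hσ : σ ≠ 0) :
    ∫ t : ℝ, t ^ k * gaussianPDFReal 0 (σ ^ 2) t = (σ:ℝ) ^ k * gaussMoment k := by
  have hσ' : (0:ℝ) < σ := NNReal.coe_pos.2 (pos_iff_ne_zero.2 hσ)
  have h := Measure.integral_comp_mul_left (fun t : ℝ => t ^ k * gaussianPDFReal 0 (σ ^ 2) t) (σ:ℝ)
  have h2 : (∫ x : ℝ, ((σ:ℝ) * x) ^ k * gaussianPDFReal 0 (σ ^ 2) ((σ:ℝ) * x))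
      = (σ:ℝ) ^ k * (σ:ℝ)⁻¹ * gaussMoment k := by
    rw [show (fun x : ℝ => ((σ:ℝ) * x) ^ k * gaussianPDFReal 0 (σ ^ 2) ((σ:ℝ) * x))
        = fun x : ℝ => ((σ:ℝ) ^ k * (σ:ℝ)⁻¹) * (x ^ k * gaussianPDFReal 0 1 x) from
      funext fun x => by rw [gaussianPDFReal_scale hσ, mul_pow]; ring]
    rw [integral_const_mul, gaussMoment]
  rw [h2, abs_of_pos (inv_pos.2 hσ'), smul_eq_mul] at h
  have hne : ((σ:ℝ))⁻¹ ≠ 0 := inv_ne_zero hσ'.ne'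
  field_simp at h ⊢
  linarith [h]

lemma gaussPi_eq_withDensity (n : ℕ) {σ : ℝ≥0} (hσ : σ ≠ 0) :
    (Measure.pi fun _ : Fin n => gaussianReal 0 (σ ^ 2)) =
      volume.withDensity fun x => ENNReal.ofReal (∏ i, gaussianPDFReal 0 (σ ^ 2) (x i)) := by
  have hv : (σ ^ 2 : ℝ≥0) ≠ 0 := pow_ne_zero _ hσ
  have hint1 : Integrable (gaussianPDFReal 0 (σ ^ 2)) := integrable_gaussianPDFReal 0 (σ ^ 2)
  refine Measure.pi_eq fun s hs => ?_
  rw [withDensity_apply _ (MeasurableSet.univ_pi hs)]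
  have hintW : Integrable (fun x : Fin n → ℝ => ∏ i, gaussianPDFReal 0 (σ ^ 2) (x i)) :=
    Integrable.fintype_prod (𝕜 := ℝ) fun _ => hint1
  rw [← ofReal_integral_eq_lintegral_ofReal hintW.integrableOn
    (ae_of_all _ fun x => Finset.prod_nonneg fun i _ => gaussianPDFReal_nonneg _ _ _)]
  have hind : (Set.univ.pi s).indicator
        (fun x : Fin n → ℝ => ∏ i, gaussianPDFReal 0 (σ ^ 2) (x i))
      = fun x => ∏ i, (s i).indicator (gaussianPDFReal 0 (σ ^ 2)) (x i) := by
    funext x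
    by_cases hx : x ∈ Set.univ.pi s
    · rw [Set.indicator_of_mem hx]
      exact (Finset.prod_congr rfl fun i _ =>
        (Set.indicator_of_mem (hx i (Set.mem_univ i)) _).symm)
    · rw [Set.indicator_of_notMem hx]
      rw [Set.mem_univ_pi] at hx
      push_neg at hx
      obtain ⟨i, hi⟩ := hx
      exact (Finset.prod_eq_zero (Finset.mem_univ i) (Set.indicator_of_notMem hi _)).symm
  rw [← integral_indicator (MeasurableSet.univ_pi hs), hind,
    integral_fintype_prod_volume_eq_prod (f := fun (i : Fin n) t => (s i).indicator (gaussianPDFReal 0 (σ ^ 2)) t)]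
  rw [ENNReal.ofReal_prod_of_nonneg fun i _ => by
    rw [integral_indicator (hs i)]
    exact setIntegral_nonneg (hs i) fun t _ => gaussianPDFReal_nonneg _ _ _]
  refine Finset.prod_congr rfl fun i _ => ?_
  rw [integral_indicator (hs i), gaussianReal_apply_eq_integral _ hv]

lemma gaussMoment_zero : gaussMoment 0 = 1 := by
  rw [gaussMoment]
  simp only [pow_zero, one_mul]
  exact integral_gaussianPDFReal_eq_one 0 one_ne_zero

lemma measurable_gaussW (n : ℕ) (σ : ℝ≥0) :
    Measurable fun x : Fin n → ℝ => (∏ i, gaussianPDFReal 0 (σ ^ 2) (x i)).toNNReal :=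
  (Finset.measurable_prod _ fun i _ =>
    (measurable_gaussianPDFReal 0 (σ ^ 2)).comp (measurable_pi_apply i)).real_toNNReal

lemma gaussW_nonneg (n : ℕ) (σ : ℝ≥0) (x : Fin n → ℝ) :
    0 ≤ ∏ i, gaussianPDFReal 0 (σ ^ 2) (x i) :=
  Finset.prod_nonneg fun i _ => gaussianPDFReal_nonneg _ _ _

lemma gaussPi_pow_eval {n : ℕ} {σ : ℝ≥0} (hσ : σ ≠ 0) (i : Fin n) (k : ℕ) :
    Integrable (fun x : Fin n → ℝ => (x i) ^ k)
      (Measure.pi fun _ : Fin n => gaussianReal 0 (σ ^ 2)) ∧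
    ∫ x : Fin n → ℝ, (x i) ^ k ∂(Measure.pi fun _ : Fin n => gaussianReal 0 (σ ^ 2))
      = (σ:ℝ) ^ k * gaussMoment k := by
  have hv : (σ ^ 2 : ℝ≥0) ≠ 0 := pow_ne_zero _ hσ
  have hD := measurable_gaussW n σ
  have hof : (fun x : Fin n → ℝ => ENNReal.ofReal (∏ i, gaussianPDFReal 0 (σ ^ 2) (x i)))
      = fun x => (((∏ i, gaussianPDFReal 0 (σ ^ 2) (x i)).toNNReal : ℝ≥0) : ℝ≥0∞) := rfl
  set f : Fin n → ℝ → ℝ :=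
    fun j t => t ^ (if j = i then k else 0) * gaussianPDFReal 0 (σ ^ 2) t with hf
  have hfj : ∀ j, Integrable (f j) := fun j => integrable_pow_mul_gaussianPDFReal _ hv
  have hkey : ∀ x : Fin n → ℝ,
      (∏ i, gaussianPDFReal 0 (σ ^ 2) (x i)).toNNReal • (x i) ^ k = ∏ j, f j (x j) := by
    intro x
    rw [NNReal.smul_def, Real.coe_toNNReal _ (gaussW_nonneg n σ x), hf]
    simp only
    rw [Finset.prod_mul_distrib]
    have h1 : ∀ j, (x j) ^ (if j = i then k else 0) = if j = i then (x j) ^ k else 1 := by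
      intro j; split <;> simp
    rw [Finset.prod_congr rfl fun j _ => h1 j, Finset.prod_ite_eq']
    simp [mul_comm]
  constructor
  · rw [gaussPi_eq_withDensity n hσ, hof, integrable_withDensity_iff_integrable_smul hD]
    refine (Integrable.fintype_prod (𝕜 := ℝ) hfj).congr (Eventually.of_forall fun x => ?_)
    exact (hkey x).symm
  · rw [gaussPi_eq_withDensity n hσ, hof, integral_withDensity_eq_integral_smul hD]
    rw [show (fun x : Fin n → ℝ => (∏ i, gaussianPDFReal 0 (σ ^ 2) (x i)).toNNReal • (x i) ^ k)
        = fun x => ∏ j, f j (x j) from funext hkey]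
    rw [integral_fintype_prod_volume_eq_prod (f := f)]
    have h2 : ∀ j, ∫ t, f j t = if j = i then (σ:ℝ) ^ k * gaussMoment k else 1 := by
      intro j
      rw [hf]
      simp only
      rw [pow_mul_gaussianPDFReal_integral _ hσ]
      split
      · rfl
      · simp [gaussMoment_zero]
    rw [Finset.prod_congr rfl fun j _ => h2 j, Finset.prod_ite_eq']
    simp

lemma gaussPi_S {n : ℕ} {σ : ℝ≥0} (hσ : σ ≠ 0) :
    Integrable (fun x : Fin n → ℝ => ∑ i, x i ^ 2)
      (Measure.pi fun _ : Fin n => gaussianReal 0 (σ ^ 2)) ∧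
    ∫ x : Fin n → ℝ, (∑ i, x i ^ 2) ∂(Measure.pi fun _ : Fin n => gaussianReal 0 (σ ^ 2))
      = (n : ℝ) * ((σ:ℝ) ^ 2 * gaussMoment 2) := by
  constructor
  · exact integrable_finset_sum _ fun i _ => (gaussPi_pow_eval hσ i 2).1
  · rw [integral_finset_sum _ fun i _ => (gaussPi_pow_eval hσ i 2).1]
    rw [Finset.sum_congr rfl fun i _ => (gaussPi_pow_eval hσ i 2).2]
    simp [mul_assoc]

lemma gaussPi_S2 {n : ℕ} {σ : ℝ≥0} (hσ : σ ≠ 0) :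
    Integrable (fun x : Fin n → ℝ => (∑ i, x i ^ 2) ^ 2)
      (Measure.pi fun _ : Fin n => gaussianReal 0 (σ ^ 2)) ∧
    ∫ x : Fin n → ℝ, (∑ i, x i ^ 2) ^ 2 ∂(Measure.pi fun _ : Fin n => gaussianReal 0 (σ ^ 2))
      ≤ (n : ℝ) ^ 2 * ((σ:ℝ) ^ 4 * gaussMoment 4) := by
  set μσ := Measure.pi fun _ : Fin n => gaussianReal 0 (σ ^ 2) with hμσ
  have hbd : ∀ x : Fin n → ℝ, (∑ i, x i ^ 2) ^ 2 ≤ (n : ℝ) * ∑ i, x i ^ 4 := by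
    intro x
    have := sq_sum_le_card_mul_sum_sq (s := Finset.univ) (f := fun i => x i ^ 2)
    simpa [← pow_mul, Finset.card_univ] using this
  have hint4 : Integrable (fun x : Fin n → ℝ => (n : ℝ) * ∑ i, x i ^ 4) μσ :=
    (integrable_finset_sum _ fun i _ => (gaussPi_pow_eval hσ i 4).1).const_mul _
  have hmeas : AEStronglyMeasurable (fun x : Fin n → ℝ => (∑ i, x i ^ 2) ^ 2) μσ := by
    refine Measurable.aestronglyMeasurable ?_
    exact ((Finset.measurable_sum _ fun i _ =>
      (measurable_pi_apply i).pow_const 2).pow_const 2)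
  have hintS2 : Integrable (fun x : Fin n → ℝ => (∑ i, x i ^ 2) ^ 2) μσ := by
    refine hint4.mono' hmeas (Eventually.of_forall fun x => ?_)
    rw [Real.norm_eq_abs, abs_of_nonneg (by positivity)]
    exact hbd x
  refine ⟨hintS2, ?_⟩
  calc ∫ x : Fin n → ℝ, (∑ i, x i ^ 2) ^ 2 ∂μσ
      ≤ ∫ x : Fin n → ℝ, (n : ℝ) * ∑ i, x i ^ 4 ∂μσ :=
        integral_mono hintS2 hint4 hbd
    _ = (n : ℝ) ^ 2 * ((σ:ℝ) ^ 4 * gaussMoment 4) := by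
        rw [integral_const_mul, integral_finset_sum _ fun i _ => (gaussPi_pow_eval hσ i 4).1,
          Finset.sum_congr rfl fun i _ => (gaussPi_pow_eval hσ i 4).2]
        simp; ring

lemma prod_gaussianPDFReal_eq (n : ℕ) {σ : ℝ≥0} (hσ : σ ≠ 0) (x : Fin n → ℝ) :
    ∏ i, gaussianPDFReal 0 (σ ^ 2) (x i)
      = ((Real.sqrt (2 * π))⁻¹ * (σ:ℝ)⁻¹) ^ n
        * Real.exp (-(∑ i, x i ^ 2) * (2 * (σ:ℝ) ^ 2)⁻¹) := by
  have hσ' : (0:ℝ) < σ := NNReal.coe_pos.2 (pos_iff_ne_zero.2 hσ)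
  have hsqrt : Real.sqrt (2 * π * ((σ ^ 2 : ℝ≥0) : ℝ)) = Real.sqrt (2 * π) * (σ:ℝ) := by
    push_cast
    rw [Real.sqrt_mul (by positivity) ((σ:ℝ) ^ 2), Real.sqrt_sq hσ'.le]
  simp_rw [gaussianPDFReal_zero_mean, Finset.prod_mul_distrib, Finset.prod_const,
    Finset.card_univ, Fintype.card_fin, ← Real.exp_sum, hsqrt, mul_inv]
  congr 1
  push_cast
  rw [← Finset.sum_div]
  rw [div_eq_mul_inv, ← Finset.sum_neg_distrib, mul_inv]

lemma gaussW_ratio (n : ℕ) {σ σ₀ : ℝ≥0} (h0 : σ ≠ 0) (h1 : σ ≤ σ₀) {x : Fin n → ℝ}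
    (hx : 1 ≤ ∑ i, x i ^ 2) :
    ∏ i, gaussianPDFReal 0 (σ ^ 2) (x i)
      ≤ (((σ₀:ℝ) / σ) ^ n * Real.exp ((2 * (σ₀:ℝ) ^ 2)⁻¹ - (2 * (σ:ℝ) ^ 2)⁻¹))
        * ∏ i, gaussianPDFReal 0 (σ₀ ^ 2) (x i) := by
  have h00 : σ₀ ≠ 0 := fun h => h0 (le_antisymm (h ▸ h1) zero_le)
  have hσ' : (0:ℝ) < σ := NNReal.coe_pos.2 (pos_iff_ne_zero.2 h0)
  have hσ0' : (0:ℝ) < σ₀ := NNReal.coe_pos.2 (pos_iff_ne_zero.2 h00)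
  have h1' : (σ:ℝ) ≤ (σ₀:ℝ) := NNReal.coe_le_coe.2 h1
  rw [prod_gaussianPDFReal_eq n h0 x, prod_gaussianPDFReal_eq n h00 x]
  set S := ∑ i, x i ^ 2 with hS
  set a := (2 * (σ:ℝ) ^ 2)⁻¹ with ha
  set b := (2 * (σ₀:ℝ) ^ 2)⁻¹ with hb
  have hconst : ((σ₀:ℝ) / σ) ^ n * ((Real.sqrt (2 * π))⁻¹ * (σ₀:ℝ)⁻¹) ^ n
      = ((Real.sqrt (2 * π))⁻¹ * (σ:ℝ)⁻¹) ^ n := by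
    rw [← mul_pow]
    congr 1
    field_simp
  have hba : b ≤ a := by
    rw [ha, hb]
    apply inv_anti₀ (by positivity)
    nlinarith
  have hexp : Real.exp (-S * a) ≤ Real.exp (b - a) * Real.exp (-S * b) := by
    rw [← Real.exp_add, Real.exp_le_exp]
    nlinarith [mul_nonneg (sub_nonneg.2 hx) (sub_nonneg.2 hba)]
  calc ((Real.sqrt (2 * π))⁻¹ * (σ:ℝ)⁻¹) ^ n * Real.exp (-S * a)
      ≤ ((Real.sqrt (2 * π))⁻¹ * (σ:ℝ)⁻¹) ^ n * (Real.exp (b - a) * Real.exp (-S * b)) := by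
        apply mul_le_mul_of_nonneg_left hexp (by positivity)
    _ = ((σ₀:ℝ) / σ) ^ n * Real.exp (b - a)
        * (((Real.sqrt (2 * π))⁻¹ * (σ₀:ℝ)⁻¹) ^ n * Real.exp (-S * b)) := by
        rw [← hconst]; ring

lemma tendsto_pow_inv_mul_exp_neg_inv_sq (k : ℕ) :
    Tendsto (fun t : ℝ => t⁻¹ ^ k * Real.exp (-(2 * t ^ 2)⁻¹)) (𝓝[>] (0:ℝ)) (𝓝 0) := by
  have core : Tendsto (fun u : ℝ => u ^ k * Real.exp (-(1/2) * u ^ 2)) atTop (𝓝 0) := by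
    have h := rpow_mul_exp_neg_mul_sq_isLittleO_exp_neg (b := 1/2) one_half_pos (k:ℝ)
    simp only [Real.rpow_natCast] at h
    have h2 : Tendsto (fun x : ℝ => Real.exp (-(1/2) * x)) atTop (𝓝 0) := by
      have h3 : Tendsto (fun x : ℝ => (1/2 : ℝ) * x) atTop atTop :=
        tendsto_id.const_mul_atTop one_half_pos
      exact (Real.tendsto_exp_neg_atTop_nhds_zero.comp h3).congr fun x => by
        simp [Function.comp, neg_mul]
    exact h.isBigO.trans_tendsto h2
  refine (core.comp tendsto_inv_nhdsGT_zero).congr' ?_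
  filter_upwards [self_mem_nhdsWithin] with t ht
  have ht' : (t:ℝ) ≠ 0 := ne_of_gt ht
  simp only [Function.comp]
  congr 1
  rw [neg_mul]
  congr 1
  field_simp

lemma sq_sqrt_bound {S δ : ℝ} (hS : 0 ≤ S) (hδ : 0 < δ) :
    S * Real.sqrt S ≤ δ * S + S ^ 2 / δ := by
  rcases le_or_gt S (δ ^ 2) with h | h
  · have h1 : Real.sqrt S ≤ δ := by
      calc Real.sqrt S ≤ Real.sqrt (δ ^ 2) := Real.sqrt_le_sqrt h
        _ = δ := Real.sqrt_sq hδ.le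
    have h2 : S * Real.sqrt S ≤ S * δ := mul_le_mul_of_nonneg_left h1 hS
    nlinarith [sq_nonneg S, div_nonneg (sq_nonneg S) hδ.le]
  · have h1 : δ ≤ Real.sqrt S := by
      rw [show δ = Real.sqrt (δ ^ 2) from (Real.sqrt_sq hδ.le).symm]
      exact Real.sqrt_le_sqrt h.le
    have h2 : Real.sqrt S ≤ S / δ := by
      rw [le_div_iff₀ hδ]
      calc Real.sqrt S * δ ≤ Real.sqrt S * Real.sqrt S :=
            mul_le_mul_of_nonneg_left h1 (Real.sqrt_nonneg S)
        _ = S := Real.mul_self_sqrt hS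
    have h3 : S * Real.sqrt S ≤ S * (S / δ) := mul_le_mul_of_nonneg_left h2 hS
    have : S * (S / δ) = S ^ 2 / δ := by ring
    nlinarith [mul_nonneg hδ.le hS]

lemma dot_bound {n m : ℕ} (ω : Matrix (Fin n) (Fin m) ℝ) (Rε : Fin m → ℝ) (C : ℝ)
    (ε : Fin n → ℝ) (hRb : Real.sqrt (∑ j, Rε j ^ 2) ≤ C * ∑ i, ε i ^ 2)
    {δ : ℝ} (hδ : 0 < δ) :
    |ε ⬝ᵥ (ω *ᵥ Rε)| ≤ (∑ i, ∑ j, |ω i j|) * max C 0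
      * (δ * (∑ i, ε i ^ 2) + (∑ i, ε i ^ 2) ^ 2 / δ) := by
  set S := ∑ i, ε i ^ 2 with hSdef
  have hS0 : 0 ≤ S := Finset.sum_nonneg fun i _ => sq_nonneg _
  have h1 : ∀ i, |ε i| ≤ Real.sqrt S := by
    intro i
    rw [← Real.sqrt_sq_eq_abs]
    exact Real.sqrt_le_sqrt (Finset.single_le_sum (fun j _ => sq_nonneg (ε j)) (Finset.mem_univ i))
  have h2 : ∀ j, |Rε j| ≤ max C 0 * S := by
    intro j
    calc |Rε j| = Real.sqrt (Rε j ^ 2) := (Real.sqrt_sq_eq_abs _).symm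
      _ ≤ Real.sqrt (∑ j', Rε j' ^ 2) :=
          Real.sqrt_le_sqrt (Finset.single_le_sum (fun j' _ => sq_nonneg (Rε j')) (Finset.mem_univ j))
      _ ≤ C * S := hRb
      _ ≤ max C 0 * S := mul_le_mul_of_nonneg_right (le_max_left C 0) hS0
  have hCm : (0:ℝ) ≤ max C 0 := le_max_right C 0
  have hstep : |ε ⬝ᵥ (ω *ᵥ Rε)| ≤ (∑ i, ∑ j, |ω i j|) * (max C 0 * (S * Real.sqrt S)) := by
    calc |ε ⬝ᵥ (ω *ᵥ Rε)| = |∑ i, ε i * (ω *ᵥ Rε) i| := by rw [dotProduct]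
      _ ≤ ∑ i, |ε i * (ω *ᵥ Rε) i| := Finset.abs_sum_le_sum_abs _ _
      _ ≤ ∑ i, Real.sqrt S * (max C 0 * S) * ∑ j, |ω i j| := by
          refine Finset.sum_le_sum fun i _ => ?_
          rw [abs_mul]
          have hmv : |(ω *ᵥ Rε) i| ≤ ∑ j, |ω i j| * (max C 0 * S) := by
            calc |(ω *ᵥ Rε) i| = |∑ j, ω i j * Rε j| := by rw [Matrix.mulVec, dotProduct]
              _ ≤ ∑ j, |ω i j * Rε j| := Finset.abs_sum_le_sum_abs _ _
              _ ≤ ∑ j, |ω i j| * (max C 0 * S) := Finset.sum_le_sum fun j _ => by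
                  rw [abs_mul]
                  exact mul_le_mul_of_nonneg_left (h2 j) (abs_nonneg _)
          calc |ε i| * |(ω *ᵥ Rε) i|
              ≤ Real.sqrt S * (∑ j, |ω i j| * (max C 0 * S)) :=
                mul_le_mul (h1 i) hmv (abs_nonneg _) (Real.sqrt_nonneg S)
            _ = Real.sqrt S * (max C 0 * S) * ∑ j, |ω i j| := by
                rw [← Finset.sum_mul]; ring
      _ = (∑ i, ∑ j, |ω i j|) * (max C 0 * (S * Real.sqrt S)) := by
          rw [← Finset.mul_sum]; ring
  refine hstep.trans ?_
  rw [mul_assoc]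
  refine mul_le_mul_of_nonneg_left ?_
    (Finset.sum_nonneg fun i _ => Finset.sum_nonneg fun j _ => abs_nonneg _)
  exact mul_le_mul_of_nonneg_left (sq_sqrt_bound hS0 hδ) hCm

/-- If `F(s+ε) − F(s) = J·ε + R(ε)` with a quadratic remainder bound
`‖R(ε)‖ ≤ C‖ε‖²` (Euclidean norms) for `‖ε‖ ≤ 1`, then for `ε ~ N(0, σ² I_n)` the
scaled error term `(1/σ²)·E[εᵀ·ω·R(ε)]` vanishes as `σ → 0⁺`. -/
theorem ldrl_remainder_vanishes (n m : ℕ)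
    (F : (Fin n → ℝ) → (Fin m → ℝ)) (s : Fin n → ℝ)
    (J : Matrix (Fin m) (Fin n) ℝ) (ω : Matrix (Fin n) (Fin m) ℝ)
    (R : (Fin n → ℝ) → (Fin m → ℝ)) (C : ℝ)
    (hR : ∀ ε : Fin n → ℝ, F (s + ε) - F s = J *ᵥ ε + R ε)
    (hC : ∀ ε : Fin n → ℝ, Real.sqrt (∑ i, ε i ^ 2) ≤ 1 →
        Real.sqrt (∑ i, (R ε) i ^ 2) ≤ C * ∑ i, ε i ^ 2)
    (μ : ℝ≥0 → Measure (Fin n → ℝ))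
    (hμ : ∀ σ : ℝ≥0, μ σ = Measure.pi fun _ : Fin n => gaussianReal 0 (σ ^ 2)) :
    Tendsto (fun σ : ℝ≥0 => |(((σ : ℝ) ^ 2)⁻¹) * ∫ ε, ε ⬝ᵥ (ω *ᵥ R ε) ∂(μ σ)|)
      (nhdsWithin 0 (Set.Ioi 0)) (nhds 0) := by
  classical
  set g : (Fin n → ℝ) → ℝ := fun ε => ε ⬝ᵥ (ω *ᵥ R ε) with hg
  by_cases hex : ∃ σ₀ : ℝ≥0, σ₀ ≠ 0 ∧ Integrable g (μ σ₀)
  case neg =>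
    push_neg at hex
    have hzero : ∀ᶠ σ : ℝ≥0 in nhdsWithin 0 (Set.Ioi 0),
        (0:ℝ) = |(((σ : ℝ) ^ 2)⁻¹) * ∫ ε, g ε ∂(μ σ)| := by
      filter_upwards [self_mem_nhdsWithin] with σ hσ
      rw [integral_undef (hex σ (ne_of_gt hσ))]
      simp
    exact Tendsto.congr' hzero tendsto_const_nhds
  case pos =>
  obtain ⟨σ₀, hσ₀ne, hIσ₀⟩ := hex
  have hσ₀pos : (0:ℝ≥0) < σ₀ := pos_iff_ne_zero.2 hσ₀ne
  have hσ₀' : (0:ℝ) < σ₀ := NNReal.coe_pos.2 hσ₀pos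
  set I0 : ℝ := ∫ x, ‖g x‖ ∂(μ σ₀) with hI0def
  have hI0nn : 0 ≤ I0 := integral_nonneg fun x => norm_nonneg _
  set Ω : ℝ := ∑ i, ∑ j, |ω i j| with hΩdef
  have hΩnn : 0 ≤ Ω := Finset.sum_nonneg fun i _ => Finset.sum_nonneg fun j _ => abs_nonneg _
  set Cm : ℝ := max C 0 with hCmdef
  have hCmnn : 0 ≤ Cm := le_max_right C 0
  set B : ℝ := Ω * Cm with hBdef
  have hBnn : 0 ≤ B := mul_nonneg hΩnn hCmnn
  set m2 : ℝ := gaussMoment 2 with hm2def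
  have hm2nn : 0 ≤ m2 := integral_nonneg fun t => mul_nonneg (by positivity) (gaussianPDFReal_nonneg _ _ _)
  set m4 : ℝ := gaussMoment 4 with hm4def
  have hm4nn : 0 ≤ m4 := integral_nonneg fun t => mul_nonneg (by positivity) (gaussianPDFReal_nonneg _ _ _)
  set r : ℝ≥0 → ℝ := fun σ =>
    ((σ₀:ℝ) / (σ:ℝ)) ^ n * Real.exp ((2 * (σ₀:ℝ) ^ 2)⁻¹ - (2 * (σ:ℝ) ^ 2)⁻¹) with hrdef
  refine tendsto_order.2 ⟨fun a ha => Eventually.of_forall fun σ =>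
    lt_of_lt_of_le ha (abs_nonneg _), fun a ha => ?_⟩
  set T : ℝ := B * ((n:ℝ) * m2) with hTdef
  have hTnn : 0 ≤ T := mul_nonneg hBnn (mul_nonneg (Nat.cast_nonneg n) hm2nn)
  set δ : ℝ := min 1 (a / (3 * (T + 1))) with hδdef
  have hδpos : 0 < δ := lt_min one_pos (by positivity)
  have hδa : B * δ * ((n:ℝ) * m2) < a := by
    have h1 : δ ≤ a / (3 * (T + 1)) := min_le_right _ _
    have h2 : B * δ * ((n:ℝ) * m2) = T * δ := by rw [hTdef]; ring
    have h3 : T * δ ≤ T * (a / (3 * (T + 1))) := mul_le_mul_of_nonneg_left h1 hTnn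
    have h4 : T * (a / (3 * (T + 1))) < a := by
      rw [mul_div_assoc']
      rw [div_lt_iff₀ (by positivity)]
      nlinarith
    linarith [h2 ▸ h3.trans_lt h4]
  set ψ : ℝ≥0 → ℝ := fun σ => B * δ * ((n:ℝ) * m2)
    + B / δ * ((n:ℝ) ^ 2 * m4) * (σ:ℝ) ^ 2 + I0 * (r σ / (σ:ℝ) ^ 2) with hψdef
  -- limit of ψ
  have hcoe : Tendsto (fun σ : ℝ≥0 => (σ:ℝ)) (nhdsWithin 0 (Set.Ioi 0))
      (nhdsWithin 0 (Set.Ioi (0:ℝ))) := by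
    refine tendsto_nhdsWithin_of_tendsto_nhds_of_eventually_within _
      ((NNReal.continuous_coe.tendsto 0).mono_left nhdsWithin_le_nhds) ?_
    filter_upwards [self_mem_nhdsWithin] with σ hσ
    exact NNReal.coe_pos.2 hσ
  have t0 : Tendsto (fun σ : ℝ≥0 => (σ:ℝ)) (nhdsWithin 0 (Set.Ioi 0)) (nhds 0) :=
    hcoe.mono_right nhdsWithin_le_nhds
  have t2 : Tendsto (fun σ : ℝ≥0 => (σ:ℝ) ^ 2) (nhdsWithin 0 (Set.Ioi 0)) (nhds 0) := by
    have := t0.pow 2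
    simpa using this
  have t3 : Tendsto (fun σ : ℝ≥0 => r σ / (σ:ℝ) ^ 2) (nhdsWithin 0 (Set.Ioi 0)) (nhds 0) := by
    set c : ℝ := (σ₀:ℝ) ^ n * Real.exp ((2 * (σ₀:ℝ) ^ 2)⁻¹) with hcdef
    have base := (tendsto_pow_inv_mul_exp_neg_inv_sq (n + 2)).comp hcoe
    have base2 := base.const_mul c
    rw [mul_zero] at base2
    refine base2.congr' ?_
    filter_upwards [self_mem_nhdsWithin] with σ hσ
    have hσ' : (0:ℝ) < σ := NNReal.coe_pos.2 hσ
    simp only [Function.comp, hrdef, hcdef]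
    rw [sub_eq_add_neg, Real.exp_add, div_pow, pow_add]
    field_simp
    ring
    rw [← mul_pow, mul_inv_cancel₀ hσ'.ne', one_pow]
  have hψlim : Tendsto ψ (nhdsWithin 0 (Set.Ioi 0)) (nhds (B * δ * ((n:ℝ) * m2))) := by
    have := ((t2.const_mul (B / δ * ((n:ℝ) ^ 2 * m4))).add
      (t3.const_mul I0)).const_add (B * δ * ((n:ℝ) * m2))
    simp only [mul_zero, add_zero] at this
    refine this.congr fun σ => ?_
    rw [hψdef]
    ring
  have E1 : ∀ᶠ σ : ℝ≥0 in nhdsWithin 0 (Set.Ioi 0), ψ σ < a :=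
    hψlim.eventually_lt_const hδa
  have E2 : ∀ᶠ σ : ℝ≥0 in nhdsWithin 0 (Set.Ioi 0), σ < σ₀ :=
    eventually_nhdsWithin_of_eventually_nhds (eventually_lt_nhds hσ₀pos)
  filter_upwards [E1, E2, self_mem_nhdsWithin] with σ hψa hσlt hσpos
  by_cases hint : Integrable g (μ σ)
  · refine lt_of_le_of_lt ?_ hψa
    have hσne : σ ≠ 0 := ne_of_gt hσpos
    have hσ' : (0:ℝ) < σ := NNReal.coe_pos.2 hσpos
    have hμσ := hμ σ
    have hμσ₀ := hμ σ₀
    set A : Set (Fin n → ℝ) := {x | 1 < ∑ i, x i ^ 2} with hAdef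
    have hAmeas : MeasurableSet A := measurableSet_lt measurable_const
      (Finset.measurable_sum _ fun i _ => (measurable_pi_apply i).pow_const 2)
    have habs : Integrable (fun x => ‖g x‖) (μ σ) := hint.norm
    have hSint : Integrable (fun x : Fin n → ℝ => ∑ i, x i ^ 2) (μ σ) := by
      rw [hμσ]; exact (gaussPi_S hσne).1
    have hSval : ∫ x, (∑ i, x i ^ 2) ∂(μ σ) = (n:ℝ) * ((σ:ℝ) ^ 2 * m2) := by
      rw [hμσ]; exact (gaussPi_S hσne).2
    have hS2int : Integrable (fun x : Fin n → ℝ => (∑ i, x i ^ 2) ^ 2) (μ σ) := by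
      rw [hμσ]; exact (gaussPi_S2 hσne).1
    have hS2val : ∫ x, (∑ i, x i ^ 2) ^ 2 ∂(μ σ) ≤ (n:ℝ) ^ 2 * ((σ:ℝ) ^ 4 * m4) := by
      rw [hμσ]; exact (gaussPi_S2 hσne).2
    set hfun : (Fin n → ℝ) → ℝ :=
      fun x => B * δ * (∑ i, x i ^ 2) + B / δ * (∑ i, x i ^ 2) ^ 2 with hhdef
    have hhint : Integrable hfun (μ σ) := (hSint.const_mul _).add (hS2int.const_mul _)
    have hbulk : (∫ x in Aᶜ, ‖g x‖ ∂(μ σ))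
        ≤ B * δ * ((n:ℝ) * ((σ:ℝ) ^ 2 * m2)) + B / δ * ((n:ℝ) ^ 2 * ((σ:ℝ) ^ 4 * m4)) := by
      have hpt : ∀ x ∈ Aᶜ, ‖g x‖ ≤ hfun x := by
        intro x hx
        have hx1 : ∑ i, x i ^ 2 ≤ 1 := not_lt.1 hx
        have hsq1 : Real.sqrt (∑ i, x i ^ 2) ≤ 1 := by
          rw [show (1:ℝ) = Real.sqrt 1 from Real.sqrt_one.symm]
          exact Real.sqrt_le_sqrt (by simpa using hx1)
        have hb := dot_bound ω (R x) C x (hC x hsq1) hδpos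
        rw [Real.norm_eq_abs]
        refine le_trans hb (le_of_eq ?_)
        rw [hhdef, hBdef, hΩdef, hCmdef]
        simp only
        ring
      have hpt0 : ∀ x, 0 ≤ hfun x := by
        intro x
        have hS0 : (0:ℝ) ≤ ∑ i, x i ^ 2 := Finset.sum_nonneg fun i _ => sq_nonneg _
        rw [hhdef]
        exact add_nonneg (mul_nonneg (mul_nonneg hBnn hδpos.le) hS0)
          (mul_nonneg (div_nonneg hBnn hδpos.le) (sq_nonneg _))
      calc (∫ x in Aᶜ, ‖g x‖ ∂(μ σ))
          ≤ ∫ x in Aᶜ, hfun x ∂(μ σ) :=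
            setIntegral_mono_on habs.integrableOn hhint.integrableOn hAmeas.compl hpt
        _ ≤ ∫ x, hfun x ∂(μ σ) :=
            setIntegral_le_integral hhint (Eventually.of_forall hpt0)
        _ = B * δ * ((n:ℝ) * ((σ:ℝ) ^ 2 * m2))
            + B / δ * ∫ x, (∑ i, x i ^ 2) ^ 2 ∂(μ σ) := by
            rw [hhdef]
            rw [integral_add (hSint.const_mul _) (hS2int.const_mul _),
              integral_const_mul, integral_const_mul, hSval]
        _ ≤ _ := add_le_add_right
            (mul_le_mul_of_nonneg_left hS2val (div_nonneg hBnn hδpos.le)) _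
    have htail : (∫ x in A, ‖g x‖ ∂(μ σ)) ≤ r σ * I0 := by
      have hr0 : 0 ≤ r σ := by
        rw [hrdef]
        positivity
      have hmeasW : Measurable fun x : Fin n → ℝ =>
          (((∏ i, gaussianPDFReal 0 (σ ^ 2) (x i)).toNNReal : ℝ≥0) : ℝ≥0∞) :=
        (measurable_gaussW n σ).coe_nnreal_ennreal
      have hmeasW0 : Measurable fun x : Fin n → ℝ =>
          (((∏ i, gaussianPDFReal 0 (σ₀ ^ 2) (x i)).toNNReal : ℝ≥0) : ℝ≥0∞) :=
        (measurable_gaussW n σ₀).coe_nnreal_ennreal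
      have hd : μ σ = volume.withDensity fun x =>
          (((∏ i, gaussianPDFReal 0 (σ ^ 2) (x i)).toNNReal : ℝ≥0) : ℝ≥0∞) := by
        rw [hμσ, gaussPi_eq_withDensity n hσne]; rfl
      have hd0 : μ σ₀ = volume.withDensity fun x =>
          (((∏ i, gaussianPDFReal 0 (σ₀ ^ 2) (x i)).toNNReal : ℝ≥0) : ℝ≥0∞) := by
        rw [hμσ₀, gaussPi_eq_withDensity n hσ₀ne]; rfl
      have hfin : ∀ᵐ x ∂(volume.restrict A),
          (((∏ i, gaussianPDFReal 0 (σ ^ 2) (x i)).toNNReal : ℝ≥0) : ℝ≥0∞) < ⊤ :=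
        ae_of_all _ fun x => ENNReal.coe_lt_top
      have hfin0 : ∀ᵐ x ∂(volume.restrict A),
          (((∏ i, gaussianPDFReal 0 (σ₀ ^ 2) (x i)).toNNReal : ℝ≥0) : ℝ≥0∞) < ⊤ :=
        ae_of_all _ fun x => ENNReal.coe_lt_top
      have hlin : (∫⁻ x in A, ‖g x‖₊ ∂(μ σ)) ≤ ENNReal.ofReal (r σ) * ENNReal.ofReal I0 := by
        calc (∫⁻ x in A, ‖g x‖₊ ∂(μ σ))
            = ∫⁻ x in A, (((∏ i, gaussianPDFReal 0 (σ ^ 2) (x i)).toNNReal : ℝ≥0∞)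
                * ‖g x‖₊) ∂volume := by
              rw [hd, restrict_withDensity hAmeas,
                lintegral_withDensity_eq_lintegral_mul_non_measurable _ hmeasW hfin]
              rfl
          _ ≤ ∫⁻ x in A, (ENNReal.ofReal (r σ)
                * (((∏ i, gaussianPDFReal 0 (σ₀ ^ 2) (x i)).toNNReal : ℝ≥0∞) * ‖g x‖₊)) ∂volume := by
              refine lintegral_mono_ae ?_
              filter_upwards [ae_restrict_mem hAmeas] with x hx
              have hx1 : 1 ≤ ∑ i, x i ^ 2 := le_of_lt hx
              have hratio := gaussW_ratio n hσne hσlt.le hx1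
              have hle : ((∏ i, gaussianPDFReal 0 (σ ^ 2) (x i)).toNNReal : ℝ≥0∞)
                  ≤ ENNReal.ofReal (r σ)
                    * ((∏ i, gaussianPDFReal 0 (σ₀ ^ 2) (x i)).toNNReal : ℝ≥0∞) := by
                show ENNReal.ofReal (∏ i, gaussianPDFReal 0 (σ ^ 2) (x i))
                  ≤ ENNReal.ofReal (r σ) * ENNReal.ofReal (∏ i, gaussianPDFReal 0 (σ₀ ^ 2) (x i))
                rw [← ENNReal.ofReal_mul hr0]
                exact ENNReal.ofReal_le_ofReal (by rw [hrdef]; exact hratio)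
              rw [← mul_assoc]
              exact mul_le_mul_left hle _
          _ = ENNReal.ofReal (r σ) * ∫⁻ x in A,
                (((∏ i, gaussianPDFReal 0 (σ₀ ^ 2) (x i)).toNNReal : ℝ≥0∞) * ‖g x‖₊) ∂volume :=
              lintegral_const_mul' _ _ ENNReal.ofReal_ne_top
          _ = ENNReal.ofReal (r σ) * ∫⁻ x in A, ‖g x‖₊ ∂(μ σ₀) := by
              rw [hd0, restrict_withDensity hAmeas,
                lintegral_withDensity_eq_lintegral_mul_non_measurable _ hmeasW0 hfin0]
              rfl
          _ ≤ ENNReal.ofReal (r σ) * ∫⁻ x, ‖g x‖₊ ∂(μ σ₀) :=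
              mul_le_mul_right (lintegral_mono' Measure.restrict_le_self le_rfl) _
          _ = ENNReal.ofReal (r σ) * ENNReal.ofReal I0 := by
              rw [hI0def, ofReal_integral_norm_eq_lintegral_enorm hIσ₀]
              rfl
      have heq : (∫ x in A, ‖g x‖ ∂(μ σ)) = (∫⁻ x in A, ‖g x‖₊ ∂(μ σ)).toReal :=
        integral_norm_eq_lintegral_enorm hint.aestronglyMeasurable.restrict
      rw [heq]
      calc (∫⁻ x in A, ‖g x‖₊ ∂(μ σ)).toReal
          ≤ (ENNReal.ofReal (r σ) * ENNReal.ofReal I0).toReal :=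
            ENNReal.toReal_mono
              (ENNReal.mul_ne_top ENNReal.ofReal_ne_top ENNReal.ofReal_ne_top) hlin
        _ = r σ * I0 := by
            rw [← ENNReal.ofReal_mul hr0, ENNReal.toReal_ofReal (mul_nonneg hr0 hI0nn)]
    have hsplit : ∫ x, ‖g x‖ ∂(μ σ)
        = (∫ x in A, ‖g x‖ ∂(μ σ)) + ∫ x in Aᶜ, ‖g x‖ ∂(μ σ) :=
      (integral_add_compl hAmeas habs).symm
    have htotal : |∫ x, g x ∂(μ σ)| ≤ B * δ * ((n:ℝ) * ((σ:ℝ) ^ 2 * m2))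
        + B / δ * ((n:ℝ) ^ 2 * ((σ:ℝ) ^ 4 * m4)) + r σ * I0 := by
      calc |∫ x, g x ∂(μ σ)| ≤ ∫ x, ‖g x‖ ∂(μ σ) := by
            rw [← Real.norm_eq_abs]; exact norm_integral_le_integral_norm g
        _ = (∫ x in A, ‖g x‖ ∂(μ σ)) + ∫ x in Aᶜ, ‖g x‖ ∂(μ σ) := hsplit
        _ ≤ _ := by
            have := add_le_add htail hbulk
            linarith
    calc |((σ:ℝ) ^ 2)⁻¹ * ∫ x, g x ∂(μ σ)|
        = ((σ:ℝ) ^ 2)⁻¹ * |∫ x, g x ∂(μ σ)| := by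
          rw [abs_mul, abs_of_nonneg (by positivity)]
      _ ≤ ((σ:ℝ) ^ 2)⁻¹ * (B * δ * ((n:ℝ) * ((σ:ℝ) ^ 2 * m2))
            + B / δ * ((n:ℝ) ^ 2 * ((σ:ℝ) ^ 4 * m4)) + r σ * I0) :=
          mul_le_mul_of_nonneg_left htotal (by positivity)
      _ = ψ σ := by
          rw [hψdef]
          simp only
          field_simp

  · rw [integral_undef hint]
    simpa using ha
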